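/- Let X be a finite set with |X| = m ≥ 2, let p be a probability mass function on X, and for each x ∈ X let φ_x be an n × n positive semidefinite complex matrix with trace 1. Let σ be any n × n positive semidefinite matrix with trace 1 and let √σ denote its positive semidefinite square root. Define P_opt = sup over all POVMs {Λ_x}_{x∈X} (positive semidefinite matrices with ∑_x Λ_x = I) of ∑_x p(x)·Tr[φ_x Λ_x], and define the fidelity F(φ_x, σ) = Tr[ ( √σ · φ_x · √σ )^{1/2} ], where (·)^{1/2} is the positive semidefinite square root. Then ( ∑_x √(p(x)/m) · F(φ_x, σ) )² ≤ (1/m) · ( √P_opt + √(m − 1) · √(1 − P_opt) )². -/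

import Mathlib

open ComplexOrder

namespace Matrix.PosSemidef
variable {n 𝕜 : Type*} [Fintype n] [RCLike 𝕜] [DecidableEq n] {A : Matrix n n 𝕜}
noncomputable def sqrt (hA : A.PosSemidef) : Matrix n n 𝕜 :=
  hA.1.eigenvectorUnitary.1 * diagonal ((↑) ∘ (√·) ∘ hA.1.eigenvalues) *
    (star hA.1.eigenvectorUnitary : Matrix n n 𝕜)
lemma posSemidef_sqrt (hA : A.PosSemidef) : PosSemidef hA.sqrt := by
  have h := (posSemidef_diagonal_iff.mpr (fun i => by
    simp only [Function.comp_apply, RCLike.ofReal_nonneg]; exact Real.sqrt_nonneg _ :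
      ∀ i, 0 ≤ ((↑) ∘ (√·) ∘ hA.1.eigenvalues : n → 𝕜) i)).mul_mul_conjTranspose_same
    (hA.1.eigenvectorUnitary.1)
  simpa [sqrt, Matrix.star_eq_conjTranspose] using h
end Matrix.PosSemidef

namespace Matrix.PosSemidef
lemma sqrt_mul_self {n 𝕜 : Type*} [Fintype n] [RCLike 𝕜] [DecidableEq n] {A : Matrix n n 𝕜}
    (hA : A.PosSemidef) : hA.sqrt * hA.sqrt = A := by
  have hU : (star hA.1.eigenvectorUnitary : Matrix n n 𝕜) * hA.1.eigenvectorUnitary.1 = 1 :=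
    Matrix.mem_unitaryGroup_iff'.mp hA.1.eigenvectorUnitary.2
  conv_rhs => rw [hA.1.spectral_theorem]
  simp only [sqrt, Unitary.conjStarAlgAut_apply, Matrix.mul_assoc]
  rw [← Matrix.mul_assoc (star hA.1.eigenvectorUnitary : Matrix n n 𝕜), hU, Matrix.one_mul,
    ← Matrix.mul_assoc (diagonal _) (diagonal _), diagonal_mul_diagonal]
  congr 3
  funext i
  simp only [Function.comp_apply]
  rw [← RCLike.ofReal_mul, Real.mul_self_sqrt (hA.eigenvalues_nonneg i)]
end Matrix.PosSemidef

section FidelityGuessingAux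

open Matrix

set_option maxHeartbeats 1000000

variable {n : ℕ}

abbrev Mat (n : ℕ) := Matrix (Fin n) (Fin n) ℂ

lemma psd_trace_nonneg {A : Mat n} (hA : A.PosSemidef) : 0 ≤ A.trace := by
  exact hA.trace_nonneg

lemma psd_trace_re_nonneg {A : Mat n} (hA : A.PosSemidef) : 0 ≤ A.trace.re :=
  (Complex.le_def.mp (psd_trace_nonneg hA)).1

lemma psd_trace_mul_nonneg {A B : Mat n} (hA : A.PosSemidef) (hB : B.PosSemidef) :
    0 ≤ (A * B).trace := by
  have h1 : A * B = A * hB.sqrt * hB.sqrt := by rw [Matrix.mul_assoc, hB.sqrt_mul_self]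
  have h2 : (A * hB.sqrt * hB.sqrt).trace = (hB.sqrt * A * hB.sqrt).trace :=
    Matrix.trace_mul_cycle A hB.sqrt hB.sqrt
  have h3 : (hB.sqrt * A * hB.sqrt).PosSemidef := by
    have := hA.mul_mul_conjTranspose_same hB.sqrt
    rwa [hB.posSemidef_sqrt.1.eq] at this
  rw [h1, h2]
  exact psd_trace_nonneg h3

lemma psd_trace_mul_re_nonneg {A B : Mat n} (hA : A.PosSemidef) (hB : B.PosSemidef) :
    0 ≤ ((A * B).trace).re :=
  (Complex.le_def.mp (psd_trace_mul_nonneg hA hB)).1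

lemma trace_conj_eq (X Y : Mat n) :
    (Xᴴ * Y).trace = ∑ p : Fin n × Fin n, (starRingEnd ℂ) (X p.1 p.2) * Y p.1 p.2 := by
  rw [Fintype.sum_prod_type]
  rw [Matrix.trace]
  rw [Finset.sum_comm]
  simp [Matrix.diag, Matrix.mul_apply, Matrix.conjTranspose_apply]

lemma trace_self_re (X : Mat n) :
    ((Xᴴ * X).trace).re = ∑ p : Fin n × Fin n, ‖X p.1 p.2‖ ^ 2 := by
  rw [trace_conj_eq, Complex.re_sum]
  congr 1
  ext p
  rw [mul_comm, Complex.mul_conj, Complex.ofReal_re, Complex.normSq_eq_norm_sq]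

lemma trace_CS (X Y : Mat n) :
    ((Xᴴ * Y).trace).re ≤
      Real.sqrt (((Xᴴ * X).trace).re) * Real.sqrt (((Yᴴ * Y).trace).re) := by
  classical
  let v : EuclideanSpace ℂ (Fin n × Fin n) := WithLp.toLp 2 (fun p : Fin n × Fin n => X p.1 p.2)
  let w : EuclideanSpace ℂ (Fin n × Fin n) := WithLp.toLp 2 (fun p : Fin n × Fin n => Y p.1 p.2)
  have hinner : inner ℂ v w = (Xᴴ * Y).trace := by
    rw [trace_conj_eq]
    simp [v, w, PiLp.inner_apply, RCLike.inner_apply]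
    exact Finset.sum_congr rfl fun _ _ => mul_comm _ _
  have hX : ‖v‖ = Real.sqrt (((Xᴴ * X).trace).re) := by
    rw [EuclideanSpace.norm_eq, trace_self_re]
  have hY : ‖w‖ = Real.sqrt (((Yᴴ * Y).trace).re) := by
    rw [EuclideanSpace.norm_eq, trace_self_re]
  calc ((Xᴴ * Y).trace).re ≤ ‖(Xᴴ * Y).trace‖ := Complex.re_le_norm _
    _ = ‖inner (𝕜 := ℂ) v w‖ := by rw [hinner]
    _ ≤ ‖v‖ * ‖w‖ := norm_inner_le_norm v w
    _ = _ := by rw [hX, hY]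

lemma sqrt_congr {A B : Mat n} (h : A = B) (hA : A.PosSemidef) (hB : B.PosSemidef) :
    hA.sqrt = hB.sqrt := by subst h; rfl

lemma polar (M : Mat n) :
    ∃ W : Mat n, (1 - W * Wᴴ).PosSemidef ∧
      (Matrix.posSemidef_conjTranspose_mul_self M).sqrt.trace = (Wᴴ * M).trace := by
  classical
  have hA : (Mᴴ * M).PosSemidef := Matrix.posSemidef_conjTranspose_mul_self M
  have hH : (Mᴴ * M).IsHermitian := hA.1
  set V : Mat n := (hH.eigenvectorUnitary : Mat n) with hVdef
  set lam : Fin n → ℝ := hH.eigenvalues with hlamdef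
  have hVV : star V * V = 1 := Matrix.mem_unitaryGroup_iff'.mp hH.eigenvectorUnitary.2
  have hlam0 : ∀ i, 0 ≤ lam i := hA.eigenvalues_nonneg
  set f : (Fin n → ℝ) → Mat n :=
    fun d => V * Matrix.diagonal (RCLike.ofReal ∘ d) * star V with hfdef
  have hspec : Mᴴ * M = f lam := hH.spectral_theorem
  have hVVassoc : ∀ X : Mat n, star V * (V * X) = X := fun X => by
    rw [← Matrix.mul_assoc, hVV, one_mul]
  have hf_mul : ∀ d e : Fin n → ℝ, f d * f e = f (fun i => d i * e i) := by
    intro d e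
    simp only [hfdef, Matrix.mul_assoc]
    rw [hVVassoc]
    congr 1
    rw [← Matrix.mul_assoc (Matrix.diagonal _) (Matrix.diagonal _),
      Matrix.diagonal_mul_diagonal]
    have hfe : (fun i => ((RCLike.ofReal ∘ d) i : ℂ) * (RCLike.ofReal ∘ e) i)
        = (RCLike.ofReal ∘ fun i => d i * e i) := by
      funext i
      simp [Function.comp, Complex.ofReal_mul]
    rw [hfe]
  have hf_star : ∀ d : Fin n → ℝ, star (f d) = f d := by
    intro d
    have hd : star (RCLike.ofReal ∘ d : Fin n → ℂ) = RCLike.ofReal ∘ d := by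
      funext i
      simp [RCLike.star_def, RCLike.conj_ofReal]
    simp only [hfdef, Matrix.star_eq_conjTranspose, Matrix.conjTranspose_mul,
      Matrix.conjTranspose_conjTranspose, Matrix.diagonal_conjTranspose, hd,
      Matrix.mul_assoc]
  have hf_trace : ∀ d : Fin n → ℝ, (f d).trace = ∑ i, (d i : ℂ) := by
    intro d
    rw [hfdef]
    rw [Matrix.trace_mul_cycle, hVV, one_mul, Matrix.trace_diagonal]
    rfl
  set g : Fin n → ℝ := fun i => if lam i = 0 then 0 else (Real.sqrt (lam i))⁻¹ with hgdef
  have hgl : ∀ i, g i * lam i = Real.sqrt (lam i) := by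
    intro i
    by_cases h : lam i = 0
    · simp [hgdef, h]
    · have hpos : 0 < lam i := lt_of_le_of_ne (hlam0 i) (Ne.symm h)
      have hs : Real.sqrt (lam i) ≠ 0 := ne_of_gt (Real.sqrt_pos.mpr hpos)
      simp only [hgdef, if_neg h]
      rw [inv_mul_eq_iff_eq_mul₀ hs]
      exact (Real.mul_self_sqrt (hlam0 i)).symm
  have hgg : ∀ i, (g i * g i) * lam i * (g i * g i) = g i * g i := by
    intro i
    by_cases h : lam i = 0
    · simp [hgdef, h]
    · have hpos : 0 < lam i := lt_of_le_of_ne (hlam0 i) (Ne.symm h)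
      have hgi : g i * g i = (lam i)⁻¹ := by
        simp only [hgdef, if_neg h]
        rw [← mul_inv, Real.mul_self_sqrt (hlam0 i)]
      rw [hgi]
      field_simp
  have hWstar : (M * f g)ᴴ = f g * Mᴴ := by
    rw [Matrix.conjTranspose_mul]
    congr 1
    have := hf_star g
    rwa [Matrix.star_eq_conjTranspose] at this
  refine ⟨M * f g, ?_, ?_⟩
  · set Q : Mat n := M * f g * (f g * Mᴴ) with hQdef
    have hQ1 : Q = M * (f g * f g) * Mᴴ := by
      rw [hQdef]
      simp only [Matrix.mul_assoc]
    have hQQ : Q * Q = Q := by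
      rw [hQ1, hf_mul]
      calc M * f (fun i => g i * g i) * Mᴴ * (M * f (fun i => g i * g i) * Mᴴ)
          = M * (f (fun i => g i * g i) * (Mᴴ * M) * f (fun i => g i * g i)) * Mᴴ := by
            simp only [Matrix.mul_assoc]
        _ = M * f (fun i => g i * g i) * Mᴴ := by
            rw [hspec, hf_mul, hf_mul]
            have hfe : (fun i => (fun i => (fun i => g i * g i) i * lam i) i
                * (fun i => g i * g i) i) = (fun i => g i * g i) := by
              funext i
              simpa using hgg i
            rw [hfe]
    have hQher : Qᴴ = Q := by
      rw [hQdef, ← hWstar]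
      exact (Matrix.isHermitian_mul_conjTranspose_self (M * f g)).eq
    have hid : (1 - Q)ᴴ * (1 - Q) = 1 - Q := by
      rw [Matrix.conjTranspose_sub, Matrix.conjTranspose_one, hQher]
      rw [Matrix.sub_mul, Matrix.mul_sub, Matrix.mul_sub, hQQ]
      simp only [Matrix.one_mul, Matrix.mul_one]
      abel
    have hpsd := Matrix.posSemidef_conjTranspose_mul_self (1 - Q)
    rw [hid] at hpsd
    rw [hWstar]
    exact hpsd
  · have hsqrt : (Matrix.posSemidef_conjTranspose_mul_self M).sqrt
        = f (fun i => Real.sqrt (lam i)) := rfl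
    rw [hsqrt, hWstar, Matrix.mul_assoc, hspec, hf_mul, hf_trace, hf_trace]
    congr 1
    funext i
    exact congrArg _ (hgl i).symm

lemma conj_trace_le {C W : Mat n} (hC : C.PosSemidef) (hW : (1 - W * Wᴴ).PosSemidef) :
    ((Wᴴ * C * W).trace).re ≤ C.trace.re := by
  have h1 : (Wᴴ * C * W).trace = (C * (W * Wᴴ)).trace := by
    rw [Matrix.trace_mul_cycle Wᴴ C W, Matrix.trace_mul_comm]
  have h2 : 0 ≤ ((1 - W * Wᴴ) * C).trace := psd_trace_mul_nonneg hW hC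
  have h3 : ((1 - W * Wᴴ) * C).trace = C.trace - (C * (W * Wᴴ)).trace := by
    rw [Matrix.sub_mul, Matrix.one_mul, Matrix.trace_sub, Matrix.trace_mul_comm]
  rw [h1]
  have h4 := (Complex.le_def.mp h2).1
  rw [h3] at h4
  simp only [Complex.sub_re, Complex.zero_re] at h4
  linarith

lemma QC {φ σ Λ : Mat n} (hφ : φ.PosSemidef) (hσ : σ.PosSemidef)
    (hΛ : Λ.PosSemidef) (hΛ1 : (1 - Λ).PosSemidef)
    (hA : (hσ.sqrt * φ * hσ.sqrt).PosSemidef) :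
    (hA.sqrt.trace).re ≤
      Real.sqrt (((φ * Λ).trace).re * ((σ * Λ).trace).re) +
      Real.sqrt (((φ * (1 - Λ)).trace).re * ((σ * (1 - Λ)).trace).re) := by
  classical
  set M : Mat n := hφ.sqrt * hσ.sqrt with hMdef
  have hMM : Mᴴ * M = hσ.sqrt * φ * hσ.sqrt := by
    rw [hMdef, Matrix.conjTranspose_mul, hφ.posSemidef_sqrt.1.eq, hσ.posSemidef_sqrt.1.eq,
      Matrix.mul_assoc, ← Matrix.mul_assoc hφ.sqrt, hφ.sqrt_mul_self, ← Matrix.mul_assoc]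
  obtain ⟨W, hW, htr⟩ := polar M
  have hEq : hA.sqrt = (Matrix.posSemidef_conjTranspose_mul_self M).sqrt :=
    sqrt_congr hMM.symm hA (Matrix.posSemidef_conjTranspose_mul_self M)
  rw [hEq, htr]
  set T : Mat n := hΛ.sqrt with hTdef
  set S : Mat n := hΛ1.sqrt with hSdef
  have hone : T * T + S * S = 1 := by
    rw [hΛ.sqrt_mul_self, hΛ1.sqrt_mul_self]
    abel
  set X₁ : Mat n := T * hφ.sqrt * W with hX1def
  set Y₁ : Mat n := T * hσ.sqrt with hY1def
  set X₂ : Mat n := S * hφ.sqrt * W with hX2def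
  set Y₂ : Mat n := S * hσ.sqrt with hY2def
  have key : Wᴴ * M = X₁ᴴ * Y₁ + X₂ᴴ * Y₂ := by
    have e1 : X₁ᴴ * Y₁ = Wᴴ * (hφ.sqrt * (T * (T * hσ.sqrt))) := by
      rw [hX1def, hY1def]
      simp only [Matrix.conjTranspose_mul, show Tᴴ = T from hΛ.posSemidef_sqrt.1.eq,
        hφ.posSemidef_sqrt.1.eq, Matrix.mul_assoc]
    have e2 : X₂ᴴ * Y₂ = Wᴴ * (hφ.sqrt * (S * (S * hσ.sqrt))) := by
      rw [hX2def, hY2def]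
      simp only [Matrix.conjTranspose_mul, show Sᴴ = S from hΛ1.posSemidef_sqrt.1.eq,
        hφ.posSemidef_sqrt.1.eq, Matrix.mul_assoc]
    rw [e1, e2, ← Matrix.mul_add]
    refine congrArg (fun Z => Wᴴ * Z) ?_
    calc M = hφ.sqrt * (1 * hσ.sqrt) := by rw [Matrix.one_mul]
      _ = hφ.sqrt * ((T * T + S * S) * hσ.sqrt) := by rw [hone]
      _ = _ := by
          rw [Matrix.add_mul, Matrix.mul_add]
          simp only [Matrix.mul_assoc]
  rw [key, Matrix.trace_add, Complex.add_re]
  have bound : ∀ (Λ' : Mat n) (hΛ' : Λ'.PosSemidef) (X Y : Mat n)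
      (hX : X = hΛ'.sqrt * hφ.sqrt * W) (hY : Y = hΛ'.sqrt * hσ.sqrt),
      ((Xᴴ * Y).trace).re ≤
        Real.sqrt (((φ * Λ').trace).re * ((σ * Λ').trace).re) := by
    intro Λ' hΛ' X Y hX hY
    subst hX hY
    set T' : Mat n := hΛ'.sqrt with hT'def
    have hXX : (T' * hφ.sqrt * W)ᴴ * (T' * hφ.sqrt * W)
        = Wᴴ * (hφ.sqrt * Λ' * hφ.sqrt) * W := by
      have hC : hφ.sqrt * Λ' * hφ.sqrt = hφ.sqrt * (T' * (T' * hφ.sqrt)) := by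
        rw [← hΛ'.sqrt_mul_self]
        simp only [Matrix.mul_assoc, hT'def]
      rw [hC]
      simp only [Matrix.conjTranspose_mul, show T'ᴴ = T' from hΛ'.posSemidef_sqrt.1.eq,
        hφ.posSemidef_sqrt.1.eq, Matrix.mul_assoc]
    have hCpsd : (hφ.sqrt * Λ' * hφ.sqrt).PosSemidef := by
      have := hΛ'.mul_mul_conjTranspose_same hφ.sqrt
      rwa [hφ.posSemidef_sqrt.1.eq] at this
    have hCtr : (hφ.sqrt * Λ' * hφ.sqrt).trace = (φ * Λ').trace := by
      rw [Matrix.trace_mul_cycle hφ.sqrt Λ' hφ.sqrt, hφ.sqrt_mul_self]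
    have hXle : (((T' * hφ.sqrt * W)ᴴ * (T' * hφ.sqrt * W)).trace).re
        ≤ ((φ * Λ').trace).re := by
      rw [hXX]
      calc ((Wᴴ * (hφ.sqrt * Λ' * hφ.sqrt) * W).trace).re
          ≤ ((hφ.sqrt * Λ' * hφ.sqrt).trace).re := conj_trace_le hCpsd hW
        _ = ((φ * Λ').trace).re := by rw [hCtr]
    have hYY : ((T' * hσ.sqrt)ᴴ * (T' * hσ.sqrt)).trace = (σ * Λ').trace := by
      have h5 : (T' * hσ.sqrt)ᴴ * (T' * hσ.sqrt) = hσ.sqrt * Λ' * hσ.sqrt := by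
        have hC : hσ.sqrt * Λ' * hσ.sqrt = hσ.sqrt * (T' * (T' * hσ.sqrt)) := by
          rw [← hΛ'.sqrt_mul_self]
          simp only [Matrix.mul_assoc, hT'def]
        rw [hC]
        simp only [Matrix.conjTranspose_mul, show T'ᴴ = T' from hΛ'.posSemidef_sqrt.1.eq,
          hσ.posSemidef_sqrt.1.eq, Matrix.mul_assoc]
      rw [h5, Matrix.trace_mul_cycle hσ.sqrt Λ' hσ.sqrt, hσ.sqrt_mul_self]
    calc (((T' * hφ.sqrt * W)ᴴ * (T' * hσ.sqrt)).trace).re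
        ≤ Real.sqrt ((((T' * hφ.sqrt * W)ᴴ * (T' * hφ.sqrt * W)).trace).re)
          * Real.sqrt ((((T' * hσ.sqrt)ᴴ * (T' * hσ.sqrt)).trace).re) := trace_CS _ _
      _ ≤ Real.sqrt (((φ * Λ').trace).re) * Real.sqrt (((σ * Λ').trace).re) := by
          apply mul_le_mul (Real.sqrt_le_sqrt hXle) (le_of_eq (by rw [hYY]))
            (Real.sqrt_nonneg _) (Real.sqrt_nonneg _)
      _ = Real.sqrt (((φ * Λ').trace).re * ((σ * Λ').trace).re) :=
          (Real.sqrt_mul (psd_trace_mul_re_nonneg hφ hΛ') _).symm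
  exact add_le_add (bound Λ hΛ X₁ Y₁ hX1def hY1def)
    (bound (1 - Λ) hΛ1 X₂ Y₂ hX2def hY2def)

lemma psd_sum {X : Type*} (s : Finset X) (f : X → Mat n)
    (h : ∀ x ∈ s, (f x).PosSemidef) : (∑ x ∈ s, f x).PosSemidef := by
  classical
  induction s using Finset.induction with
  | empty => simpa using Matrix.PosSemidef.zero
  | insert _ _ hx ih =>
    rw [Finset.sum_insert hx]
    exact ((h _ (Finset.mem_insert_self _ _)).add
      (ih fun x hxs => h x (Finset.mem_insert_of_mem hxs)))

lemma sum_sqrt_mul_sqrt_le {X : Type*} [Fintype X] (a b : X → ℝ)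
    (ha : ∀ x, 0 ≤ a x) (hb : ∀ x, 0 ≤ b x) :
    ∑ x, Real.sqrt (a x) * Real.sqrt (b x) ≤
      Real.sqrt (∑ x, a x) * Real.sqrt (∑ x, b x) := by
  have h := Finset.sum_sq_le_sum_mul_sum_of_sq_eq_mul Finset.univ
    (r := fun x => Real.sqrt (a x) * Real.sqrt (b x)) (f := a) (g := b)
    (fun i _ => ha i) (fun i _ => hb i)
    (fun i _ => by rw [mul_pow, Real.sq_sqrt (ha i), Real.sq_sqrt (hb i)])
  have hnn : 0 ≤ ∑ x, Real.sqrt (a x) * Real.sqrt (b x) :=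
    Finset.sum_nonneg fun i _ => mul_nonneg (Real.sqrt_nonneg _) (Real.sqrt_nonneg _)
  have h2 := Real.sqrt_le_sqrt h
  rwa [Real.sqrt_sq hnn, Real.sqrt_mul (Finset.sum_nonneg fun i _ => ha i)] at h2

lemma sqrt_add_le {a b : ℝ} (ha : 0 ≤ a) (hb : 0 ≤ b) :
    Real.sqrt (a + b) ≤ Real.sqrt a + Real.sqrt b := by
  rw [Real.sqrt_le_iff]
  constructor
  · positivity
  · nlinarith [Real.sq_sqrt ha, Real.sq_sqrt hb,
      mul_nonneg (Real.sqrt_nonneg a) (Real.sqrt_nonneg b)]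

lemma le_of_forall_pos_le_add' {a b : ℝ} (h : ∀ ε : ℝ, 0 < ε → a ≤ b + ε) : a ≤ b := by
  by_contra hc
  push_neg at hc
  have := h ((a - b)/2) (by linarith)
  linarith

end FidelityGuessingAux

set_option maxHeartbeats 1000000 in
/-- **Fidelity–guessing bound (quantum).**
For an ensemble `{p x, φ x}` of `n × n` density matrices indexed by a finite set `X`
with `|X| = m ≥ 2`, and any density matrix `σ`, the fidelities
`F(φ_x, σ) = Tr[(√σ φ_x √σ)^{1/2}]` and the optimal guessing probability
`P_opt = sup over POVMs {Λ x} of ∑ x, p x · Tr[φ_x Λ_x]` satisfy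
`(∑ x, √(p x / m) · F(φ_x, σ))² ≤ (1/m)(√P_opt + √(m-1)·√(1-P_opt))²`. -/
theorem fidelity_guessing_bound_quantum {X : Type*} [Fintype X] (m n : ℕ)
    (hm : Fintype.card X = m) (hm2 : 2 ≤ m)
    (p : X → ℝ) (hp0 : ∀ x, 0 ≤ p x) (hp1 : ∑ x, p x = 1)
    (φ : X → Matrix (Fin n) (Fin n) ℂ)
    (hφ : ∀ x, (φ x).PosSemidef) (hφtr : ∀ x, (φ x).trace = 1)
    (σ : Matrix (Fin n) (Fin n) ℂ) (hσ : σ.PosSemidef) (hσtr : σ.trace = 1)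
    (Popt : ℝ)
    (hPopt : Popt = sSup {r : ℝ | ∃ Λ : X → Matrix (Fin n) (Fin n) ℂ,
        (∀ x, (Λ x).PosSemidef) ∧ (∑ x, Λ x = 1) ∧
          r = ∑ x, p x * ((φ x * Λ x).trace).re})
    (F : X → ℝ)
    (hF : ∀ x, F x =
      ((Matrix.PosSemidef.sqrt
          (show (hσ.sqrt * φ x * hσ.sqrt).PosSemidef from by
            have h := (hφ x).mul_mul_conjTranspose_same hσ.sqrt
            rwa [hσ.posSemidef_sqrt.1.eq] at h)).trace).re) :
    (∑ x, Real.sqrt (p x / m) * F x) ^ 2 ≤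
      (1 / (m : ℝ)) *
        (Real.sqrt Popt + Real.sqrt ((m : ℝ) - 1) * Real.sqrt (1 - Popt)) ^ 2 := by
  classical
  have hm0 : (0:ℝ) < m := by
    have : (2:ℝ) ≤ m := by exact_mod_cast hm2
    linarith
  have hm1 : (1:ℝ) ≤ (m:ℝ) - 1 := by
    have : (2:ℝ) ≤ m := by exact_mod_cast hm2
    linarith
  set 𝒮 : Set ℝ := {r : ℝ | ∃ Λ : X → Matrix (Fin n) (Fin n) ℂ,
        (∀ x, (Λ x).PosSemidef) ∧ (∑ x, Λ x = 1) ∧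
          r = ∑ x, p x * ((φ x * Λ x).trace).re} with h𝒮
  set Sval : ℝ := ∑ x, Real.sqrt (p x / m) * F x with hSval
  have hF0 : ∀ x, 0 ≤ F x := by
    intro x
    rw [hF x]
    exact psd_trace_re_nonneg (Matrix.PosSemidef.posSemidef_sqrt _)
  have hS0 : 0 ≤ Sval :=
    Finset.sum_nonneg fun x _ => mul_nonneg (Real.sqrt_nonneg _) (hF0 x)
  -- 1 - Λ x is psd for any POVM
  have hsub1 : ∀ (Λ : X → Matrix (Fin n) (Fin n) ℂ), (∀ x, (Λ x).PosSemidef) →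
      (∑ x, Λ x = 1) → ∀ x, (1 - Λ x).PosSemidef := by
    intro Λ hps hsum x
    have h := Finset.add_sum_erase Finset.univ Λ (Finset.mem_univ x)
    rw [hsum] at h
    have he : 1 - Λ x = ∑ y ∈ Finset.univ.erase x, Λ y := by
      rw [← h]; abel
    rw [he]
    exact psd_sum _ _ fun y _ => hps y
  -- elements of 𝒮 are at most 1
  have hq1 : ∀ (Λ : X → Matrix (Fin n) (Fin n) ℂ), (∀ x, (Λ x).PosSemidef) →
      (∑ x, Λ x = 1) → ∀ x, ((φ x * Λ x).trace).re ≤ 1 := by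
    intro Λ hps hsum x
    have h0 : 0 ≤ ((φ x * (1 - Λ x)).trace).re :=
      psd_trace_mul_re_nonneg (hφ x) (hsub1 Λ hps hsum x)
    have hdec : (φ x * (1 - Λ x)).trace = (φ x).trace - (φ x * Λ x).trace := by
      rw [Matrix.mul_sub, Matrix.mul_one, Matrix.trace_sub]
    rw [hdec, hφtr x] at h0
    simp only [Complex.sub_re, Complex.one_re] at h0
    linarith
  have hbdd : ∀ r ∈ 𝒮, r ≤ 1 := by
    rintro r ⟨Λ, hps, hsum, rfl⟩
    calc ∑ x, p x * ((φ x * Λ x).trace).re ≤ ∑ x, p x * 1 :=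
          Finset.sum_le_sum fun x _ =>
            mul_le_mul_of_nonneg_left (hq1 Λ hps hsum x) (hp0 x)
      _ = 1 := by simpa using hp1
  have hne : 𝒮.Nonempty := by
    have hXne : Nonempty X := Fintype.card_pos_iff.mp (by omega)
    obtain ⟨x₀⟩ := hXne
    refine ⟨_, fun x => if x = x₀ then (1 : Matrix (Fin n) (Fin n) ℂ) else 0, ?_, ?_, rfl⟩
    · intro x
      by_cases hx : x = x₀ <;> simp [hx, Matrix.PosSemidef.one, Matrix.PosSemidef.zero]
    · simp [Finset.sum_ite_eq']
  have hBdd : BddAbove 𝒮 := ⟨1, fun r hr => hbdd r hr⟩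
  have hPopt1 : Popt ≤ 1 := by rw [hPopt]; exact csSup_le hne hbdd
  have hPle : ∀ r ∈ 𝒮, r ≤ Popt := by
    intro r hr; rw [hPopt]; exact le_csSup hBdd hr
  -- KEY estimate for each POVM
  have KEY : ∀ r ∈ 𝒮, Real.sqrt m * Sval ≤
      Real.sqrt r + Real.sqrt ((m:ℝ) - 1) * Real.sqrt (1 - r) := by
    rintro r ⟨Λ, hps, hsum, rfl⟩
    set q : X → ℝ := fun x => ((φ x * Λ x).trace).re with hq
    set rr : X → ℝ := fun x => ((σ * Λ x).trace).re with hrr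
    have hq0 : ∀ x, 0 ≤ q x := fun x => psd_trace_mul_re_nonneg (hφ x) (hps x)
    have hqle1 : ∀ x, q x ≤ 1 := fun x => hq1 Λ hps hsum x
    have hrr0 : ∀ x, 0 ≤ rr x := fun x => psd_trace_mul_re_nonneg hσ (hps x)
    have hrrle1 : ∀ x, rr x ≤ 1 := by
      intro x
      have h0 : 0 ≤ ((σ * (1 - Λ x)).trace).re :=
        psd_trace_mul_re_nonneg hσ (hsub1 Λ hps hsum x)
      have hdec : (σ * (1 - Λ x)).trace = σ.trace - (σ * Λ x).trace := by
        rw [Matrix.mul_sub, Matrix.mul_one, Matrix.trace_sub]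
      rw [hdec, hσtr] at h0
      simp only [Complex.sub_re, Complex.one_re] at h0
      simpa [hrr] using h0
    have hrrsum : ∑ x, rr x = 1 := by
      have h1 : ∑ x, (σ * Λ x).trace = (σ * ∑ x, Λ x).trace := by
        rw [Matrix.mul_sum, Matrix.trace_sum]
      have : ∑ x, rr x = (∑ x, (σ * Λ x).trace).re := (Complex.re_sum _ _).symm
      rw [this, h1, hsum, Matrix.mul_one, hσtr]
      simp
    -- fidelity bound per x
    have hFb : ∀ x, F x ≤ Real.sqrt (q x * rr x) +
        Real.sqrt ((1 - q x) * (1 - rr x)) := by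
      intro x
      rw [hF x]
      have h := QC (hφ x) hσ (hps x) (hsub1 Λ hps hsum x)
        (show (hσ.sqrt * φ x * hσ.sqrt).PosSemidef from by
          have h := (hφ x).mul_mul_conjTranspose_same hσ.sqrt
          rwa [hσ.posSemidef_sqrt.1.eq] at h)
      have e1 : ((φ x * (1 - Λ x)).trace).re = 1 - q x := by
        rw [Matrix.mul_sub, Matrix.mul_one, Matrix.trace_sub]
        rw [hφtr x]
        simp [hq]
      have e2 : ((σ * (1 - Λ x)).trace).re = 1 - rr x := by
        rw [Matrix.mul_sub, Matrix.mul_one, Matrix.trace_sub]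
        rw [hσtr]
        simp [hrr]
      rw [e1, e2] at h
      exact h
    -- sum manipulation
    have step1 : Sval ≤ ∑ x, (Real.sqrt (p x * q x) * Real.sqrt (rr x / m)
        + Real.sqrt (p x * (1 - q x)) * Real.sqrt ((1 - rr x) / m)) := by
      rw [hSval]
      apply Finset.sum_le_sum
      intro x _
      have hid : ∀ c d : ℝ, 0 ≤ c → 0 ≤ d →
          Real.sqrt (p x / m) * Real.sqrt (c * d) =
          Real.sqrt (p x * c) * Real.sqrt (d / m) := by
        intro c d hc hd
        rw [← Real.sqrt_mul (div_nonneg (hp0 x) hm0.le),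
          ← Real.sqrt_mul (mul_nonneg (hp0 x) hc)]
        congr 1
        field_simp
      calc Real.sqrt (p x / m) * F x
          ≤ Real.sqrt (p x / m) * (Real.sqrt (q x * rr x)
            + Real.sqrt ((1 - q x) * (1 - rr x))) :=
            mul_le_mul_of_nonneg_left (hFb x) (Real.sqrt_nonneg _)
        _ = Real.sqrt (p x * q x) * Real.sqrt (rr x / m)
            + Real.sqrt (p x * (1 - q x)) * Real.sqrt ((1 - rr x) / m) := by
            rw [mul_add, hid (q x) (rr x) (hq0 x) (hrr0 x),
              hid (1 - q x) (1 - rr x) (by linarith [hqle1 x]) (by linarith [hrrle1 x])]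
    have step2 : ∑ x, Real.sqrt (p x * q x) * Real.sqrt (rr x / m) ≤
        Real.sqrt (∑ x, p x * q x) * Real.sqrt (1 / m) := by
      have h := sum_sqrt_mul_sqrt_le (fun x => p x * q x) (fun x => rr x / m)
        (fun x => mul_nonneg (hp0 x) (hq0 x)) (fun x => div_nonneg (hrr0 x) hm0.le)
      have hsum2 : ∑ x, rr x / m = 1 / m := by
        rw [← Finset.sum_div, hrrsum]
      rwa [hsum2] at h
    have step3 : ∑ x, Real.sqrt (p x * (1 - q x)) * Real.sqrt ((1 - rr x) / m) ≤
        Real.sqrt (1 - ∑ x, p x * q x) * Real.sqrt (((m:ℝ) - 1) / m) := by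
      have h := sum_sqrt_mul_sqrt_le (fun x => p x * (1 - q x))
        (fun x => (1 - rr x) / m)
        (fun x => mul_nonneg (hp0 x) (by linarith [hqle1 x]))
        (fun x => div_nonneg (by linarith [hrrle1 x]) hm0.le)
      have hs1 : ∑ x, p x * (1 - q x) = 1 - ∑ x, p x * q x := by
        simp only [mul_sub, mul_one]
        rw [Finset.sum_sub_distrib, hp1]
      have hs2 : ∑ x, (1 - rr x) / m = ((m:ℝ) - 1) / m := by
        rw [← Finset.sum_div, Finset.sum_sub_distrib, hrrsum, Finset.sum_const,
          Finset.card_univ, hm]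
        simp
      rwa [hs1, hs2] at h
    have hmul1 : Real.sqrt (m:ℝ) * Real.sqrt (1 / m) = 1 := by
      rw [← Real.sqrt_mul (le_of_lt hm0)]
      rw [mul_one_div, div_self (ne_of_gt hm0), Real.sqrt_one]
    have hmul2 : Real.sqrt (m:ℝ) * Real.sqrt (((m:ℝ) - 1) / m) = Real.sqrt ((m:ℝ) - 1) := by
      rw [← Real.sqrt_mul (le_of_lt hm0)]
      congr 1
      field_simp
    calc Real.sqrt (m:ℝ) * Sval
        ≤ Real.sqrt (m:ℝ) * (Real.sqrt (∑ x, p x * q x) * Real.sqrt (1 / m)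
          + Real.sqrt (1 - ∑ x, p x * q x) * Real.sqrt (((m:ℝ) - 1) / m)) := by
          apply mul_le_mul_of_nonneg_left _ (Real.sqrt_nonneg _)
          calc Sval ≤ _ := step1
            _ = (∑ x, Real.sqrt (p x * q x) * Real.sqrt (rr x / m))
              + ∑ x, Real.sqrt (p x * (1 - q x)) * Real.sqrt ((1 - rr x) / m) :=
              Finset.sum_add_distrib
            _ ≤ _ := add_le_add step2 step3
      _ = Real.sqrt (∑ x, p x * q x) + Real.sqrt ((m:ℝ) - 1)
          * Real.sqrt (1 - ∑ x, p x * q x) := by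
          rw [mul_add]
          rw [show Real.sqrt (m:ℝ) * (Real.sqrt (∑ x, p x * q x) * Real.sqrt (1 / m))
            = Real.sqrt (∑ x, p x * q x) * (Real.sqrt (m:ℝ) * Real.sqrt (1 / m)) by ring,
            hmul1, mul_one]
          rw [show Real.sqrt (m:ℝ) * (Real.sqrt (1 - ∑ x, p x * q x)
            * Real.sqrt (((m:ℝ) - 1) / m))
            = (Real.sqrt (m:ℝ) * Real.sqrt (((m:ℝ) - 1) / m))
              * Real.sqrt (1 - ∑ x, p x * q x) by ring, hmul2]
  -- pass to the supremum
  have hfinal : Real.sqrt m * Sval ≤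
      Real.sqrt Popt + Real.sqrt ((m:ℝ) - 1) * Real.sqrt (1 - Popt) := by
    apply le_of_forall_pos_le_add'
    intro δ hδ
    have hsq : 0 < Real.sqrt ((m:ℝ) - 1) := Real.sqrt_pos.mpr (by linarith)
    set ε : ℝ := (δ / Real.sqrt ((m:ℝ) - 1)) ^ 2 with hε
    have hε0 : 0 < ε := by positivity
    obtain ⟨r, hr𝒮, hrlt⟩ := exists_lt_of_lt_csSup hne
      (show Popt - ε < sSup 𝒮 by rw [← hPopt]; linarith)
    have hrle : r ≤ Popt := hPle r hr𝒮
    have h1 : Real.sqrt r ≤ Real.sqrt Popt := Real.sqrt_le_sqrt hrle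
    have h2 : Real.sqrt (1 - r) ≤ Real.sqrt (1 - Popt) + Real.sqrt ε := by
      have he : 1 - r = (1 - Popt) + (Popt - r) := by ring
      rw [he]
      calc Real.sqrt ((1 - Popt) + (Popt - r))
          ≤ Real.sqrt (1 - Popt) + Real.sqrt (Popt - r) :=
            sqrt_add_le (by linarith) (by linarith)
        _ ≤ Real.sqrt (1 - Popt) + Real.sqrt ε :=
            add_le_add le_rfl (Real.sqrt_le_sqrt (by linarith))
    have hsqε : Real.sqrt ε = δ / Real.sqrt ((m:ℝ) - 1) :=
      Real.sqrt_sq (by positivity)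
    calc Real.sqrt m * Sval
        ≤ Real.sqrt r + Real.sqrt ((m:ℝ) - 1) * Real.sqrt (1 - r) := KEY r hr𝒮
      _ ≤ Real.sqrt Popt + Real.sqrt ((m:ℝ) - 1)
          * (Real.sqrt (1 - Popt) + Real.sqrt ε) :=
          add_le_add h1 (mul_le_mul_of_nonneg_left h2 (le_of_lt hsq))
      _ = Real.sqrt Popt + Real.sqrt ((m:ℝ) - 1) * Real.sqrt (1 - Popt) + δ := by
          rw [hsqε, mul_add]
          rw [mul_div_cancel₀ _ (ne_of_gt hsq)]
          ring
  -- square both sides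
  have hR0 : 0 ≤ Real.sqrt Popt + Real.sqrt ((m:ℝ) - 1) * Real.sqrt (1 - Popt) := by
    positivity
  have hL0 : 0 ≤ Real.sqrt m * Sval := mul_nonneg (Real.sqrt_nonneg _) hS0
  have hsq2 := pow_le_pow_left₀ hL0 hfinal 2
  rw [mul_pow, Real.sq_sqrt (le_of_lt hm0)] at hsq2
  rw [show (1 / (m:ℝ)) * (Real.sqrt Popt + Real.sqrt ((m:ℝ) - 1)
      * Real.sqrt (1 - Popt)) ^ 2
    = (Real.sqrt Popt + Real.sqrt ((m:ℝ) - 1) * Real.sqrt (1 - Popt)) ^ 2 / m by ring]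
  rw [le_div_iff₀ hm0]
  linarith
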